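/- Fix integers 0 ≤ m ≤ r and real constants a_0, …, a_r, and set p(λ) = a_0 + a_1λ + ⋯ + a_rλ^r. Let f^{kl}_m = +1 if k,l < m, -1 if k,l ≥ m, 0 otherwise. Then for any λ, Σ_{k,l=0}^{r-1} f^{kl}_m a_{k+l+1-m} λ^{k+l} = m λ^{m-1} p(λ) - λ^m p'(λ), where a_h = 0 for h < 0 or h > r. -/

import Mathlib

open Finset

lemma swap1 (f : ℕ → ℝ) (m : ℕ) :
    ∑ k ∈ range m, ∑ j ∈ range (k+1), f j = ∑ j ∈ range m, ((m:ℝ) - j) * f j := by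
  induction m with
  | zero => simp
  | succ m ih =>
    rw [sum_range_succ, ih]
    have : ∑ j ∈ range (m+1), (((m+1:ℕ):ℝ) - j) * f j
        = ∑ j ∈ range (m+1), (((m:ℝ) - j) * f j + f j) := by
      refine sum_congr rfl fun j _ => ?_
      push_cast; ring
    rw [this, sum_add_distrib, sum_range_succ (fun j => ((m:ℝ) - j) * f j)]
    simp

lemma swap2 (F : ℕ → ℝ) (n : ℕ) :
    ∑ k ∈ range n, ∑ s ∈ Ico k n, F s = ∑ s ∈ range n, ((s:ℝ) + 1) * F s := by
  induction n with
  | zero => simp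
  | succ n ih =>
    have h1 : ∀ k ∈ range (n+1), ∑ s ∈ Ico k (n+1), F s
        = (∑ s ∈ Ico k n, F s) + F n := by
      intro k hk
      exact sum_Ico_succ_top (Nat.lt_succ_iff.mp (mem_range.mp hk)) F
    rw [sum_congr rfl h1, sum_add_distrib, sum_const, card_range,
      sum_range_succ (fun k => ∑ s ∈ Ico k n, F s), Ico_self, sum_empty, add_zero, ih,
      sum_range_succ]
    ring

lemma sum_ite_lt {c : ℕ → ℝ} {m r : ℕ} (hm : m ≤ r) :
    ∑ l ∈ range r, (if l < m then c l else 0) = ∑ l ∈ range m, c l := by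
  rw [← Finset.sum_subset (Finset.range_subset_range.2 hm)
    (fun l _ hl => if_neg fun h => hl (mem_range.2 h))]
  exact Finset.sum_congr rfl fun l hl => if_pos (mem_range.1 hl)

lemma sum_ite_ge {c : ℕ → ℝ} {m r : ℕ} :
    ∑ l ∈ range r, (if m ≤ l then c l else 0) = ∑ l ∈ Ico m r, c l := by
  rw [range_eq_Ico, ← Finset.sum_subset (Finset.Ico_subset_Ico (Nat.zero_le m) le_rfl)
    (fun l _ hl => if_neg fun h => hl (mem_Ico.2 ⟨h, (mem_Ico.1 ‹l ∈ Ico 0 r›).2⟩))]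
  exact Finset.sum_congr rfl fun l hl => if_pos (mem_Ico.1 hl).1

lemma tri (G : ℕ → ℝ) (n : ℕ) :
    ∑ k ∈ range n, ∑ l ∈ range n, (if k + l < n then G (k+l) else 0)
      = ∑ s ∈ range n, ((s:ℝ) + 1) * G s := by
  rw [← swap2 G n]
  refine sum_congr rfl fun k hk => ?_
  have hk' := mem_range.mp hk
  rw [Finset.sum_Ico_eq_sum_range]
  rw [← Finset.sum_subset (Finset.range_subset_range.2 (show n - k ≤ n by omega))
    (fun l _ hl => if_neg (by simp only [mem_range] at hl ⊢; omega))]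
  exact Finset.sum_congr rfl fun l hl => if_pos (by simp only [mem_range] at hl; omega)



open Finset in
/-- With `p(λ) = a_0 + a_1 λ + ⋯ + a_r λ^r`, the convention `a_h = 0` for `h` outside
`{0,…,r}`, and `f^{kl}_m = +1` if `k,l < m`, `-1` if `k,l ≥ m`, `0` otherwise
(`0 ≤ m ≤ r`), one has
`Σ_{k,l=0}^{r-1} f^{kl}_m a_{k+l+1-m} λ^{k+l} = m λ^{m-1} p(λ) - λ^m p'(λ)`. -/
theorem stmt_10 (r m : ℕ) (hm : m ≤ r) (a : ℕ → ℝ) (A : ℤ → ℝ)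
    (hA : ∀ h : ℤ, A h = if 0 ≤ h ∧ h ≤ (r : ℤ) then a h.toNat else 0)
    (x : ℝ) :
    ∑ k ∈ Finset.range r, ∑ l ∈ Finset.range r,
        (if k < m ∧ l < m then (1 : ℝ) else if m ≤ k ∧ m ≤ l then -1 else 0) *
          A ((k : ℤ) + l + 1 - m) * x ^ (k + l) =
      (m : ℝ) * x ^ (m - 1) * (∑ h ∈ Finset.range (r + 1), a h * x ^ h) -
        x ^ m * (∑ h ∈ Finset.range (r + 1), (h : ℝ) * a h * x ^ (h - 1)) := by
  -- abbreviation for the generic term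
  set T : ℕ → ℕ → ℝ := fun k l => A ((k : ℤ) + l + 1 - m) * x ^ (k + l) with hT
  -- step 0: split the sign factor
  have key : ∀ k l : ℕ,
      (if k < m ∧ l < m then (1 : ℝ) else if m ≤ k ∧ m ≤ l then -1 else 0) *
          A ((k : ℤ) + l + 1 - m) * x ^ (k + l)
        = (if k < m then (if l < m then T k l else 0) else 0)
          - (if m ≤ k then (if m ≤ l then T k l else 0) else 0) := by
    intro k l
    simp only [hT]
    split_ifs <;> first | ring1 | (exfalso; omega)
  rw [sum_congr rfl fun k _ => sum_congr rfl fun l _ => key k l]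
  have hsplit : ∑ k ∈ range r, ∑ l ∈ range r,
      ((if k < m then (if l < m then T k l else 0) else 0)
        - (if m ≤ k then (if m ≤ l then T k l else 0) else 0))
      = (∑ k ∈ range r, ∑ l ∈ range r, (if k < m then (if l < m then T k l else 0) else 0))
        - (∑ k ∈ range r, ∑ l ∈ range r, (if m ≤ k then (if m ≤ l then T k l else 0) else 0)) := by
    rw [← Finset.sum_sub_distrib]
    exact sum_congr rfl fun k _ => Finset.sum_sub_distrib _ _
  rw [hsplit]
  -- S1
  have hS1 : (∑ k ∈ range r, ∑ l ∈ range r, (if k < m then (if l < m then T k l else 0) else 0))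
      = ∑ j ∈ range m, ((m:ℝ) - j) * (a j * x ^ (m + j - 1)) := by
    have h1 : ∀ k, ∑ l ∈ range r, (if k < m then (if l < m then T k l else 0) else 0)
        = if k < m then (∑ l ∈ range m, T k l) else 0 := by
      intro k; by_cases h : k < m
      · simp only [if_pos h]; exact sum_ite_lt hm
      · simp [h]
    rw [sum_congr rfl fun k _ => h1 k, sum_ite_lt hm, ← swap1 (fun j => a j * x ^ (m + j - 1)) m]
    refine sum_congr rfl fun k hk => ?_
    have hkm : k < m := mem_range.mp hk
    simp only [hT]
    rw [range_eq_Ico m,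
      ← Finset.sum_Ico_consecutive _ (Nat.zero_le (m - (k+1))) (show m - (k+1) ≤ m by omega)]
    have hz : ∑ l ∈ Ico 0 (m - (k+1)), A ((k:ℤ) + l + 1 - m) * x ^ (k + l) = 0 := by
      refine sum_eq_zero fun l hl => ?_
      have hl' := (mem_Ico.mp hl).2
      rw [hA, if_neg (by omega), zero_mul]
    rw [hz, zero_add, Finset.sum_Ico_eq_sum_range,
      show m - (m - (k+1)) = k + 1 by omega]
    refine sum_congr rfl fun t ht => ?_
    have ht' := mem_range.mp ht
    have harg : (k:ℤ) + ((m - (k+1) + t : ℕ) : ℤ) + 1 - m = ((t:ℕ):ℤ) := by omega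
    rw [harg, hA, if_pos (by omega), Int.toNat_natCast,
      show k + (m - (k+1) + t) = m + t - 1 by omega]
  -- S2
  have hS2 : (∑ k ∈ range r, ∑ l ∈ range r, (if m ≤ k then (if m ≤ l then T k l else 0) else 0))
      = ∑ j ∈ Ico (m+1) (r+1), ((j:ℝ) - m) * (a j * x ^ (m + j - 1)) := by
    have h1 : ∀ k, ∑ l ∈ range r, (if m ≤ k then (if m ≤ l then T k l else 0) else 0)
        = if m ≤ k then (∑ l ∈ Ico m r, T k l) else 0 := by
      intro k; by_cases h : m ≤ k
      · simp only [if_pos h]; exact sum_ite_ge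
      · simp [h]
    rw [sum_congr rfl fun k _ => h1 k, sum_ite_ge, Finset.sum_Ico_eq_sum_range,
      sum_congr rfl fun k' _ => Finset.sum_Ico_eq_sum_range (f := fun l => T (m + k') l) (m := m) (n := r)]
    have hterm : ∀ k' ∈ range (r - m), ∀ l' ∈ range (r - m),
        T (m + k') (m + l')
          = if k' + l' < r - m then a (m + (k' + l') + 1) * x ^ (2*m + (k' + l')) else 0 := by
      intro k' hk' l' hl'
      have hk'' := mem_range.mp hk'
      have hl'' := mem_range.mp hl'
      simp only [hT]
      have harg : ((m + k' : ℕ):ℤ) + ((m + l' : ℕ):ℤ) + 1 - (m:ℤ)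
          = ((m + (k' + l') + 1 : ℕ) : ℤ) := by push_cast; ring
      rw [harg, hA]
      by_cases hc : k' + l' < r - m
      · rw [if_pos (by omega), Int.toNat_natCast, if_pos hc,
          show (m + k') + (m + l') = 2*m + (k' + l') by omega]
      · rw [if_neg (by omega), if_neg hc, zero_mul]
    rw [sum_congr rfl fun k' hk' => sum_congr rfl fun l' hl' => hterm k' hk' l' hl',
      tri (fun s => a (m + s + 1) * x ^ (2*m + s)) (r - m),
      Finset.sum_Ico_eq_sum_range, show r + 1 - (m + 1) = r - m by omega]
    refine sum_congr rfl fun s _ => ?_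
    rw [show m + 1 + s = m + s + 1 by omega, show m + (m + s + 1) - 1 = 2*m + s by omega]
    push_cast; ring
  rw [hS1, hS2]
  -- RHS normalization
  have hR : (m : ℝ) * x ^ (m - 1) * (∑ h ∈ range (r + 1), a h * x ^ h) -
        x ^ m * (∑ h ∈ range (r + 1), (h : ℝ) * a h * x ^ (h - 1))
      = ∑ h ∈ range (r + 1), ((m:ℝ) - h) * (a h * x ^ (m + h - 1)) := by
    rw [Finset.mul_sum, Finset.mul_sum, ← Finset.sum_sub_distrib]
    refine sum_congr rfl fun h _ => ?_
    rcases Nat.eq_zero_or_pos m with hm0 | hm0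
    · subst hm0
      rcases Nat.eq_zero_or_pos h with hh0 | hh0
      · subst hh0; simp
      · simp only [Nat.cast_zero, zero_mul, pow_zero, one_mul, Nat.zero_add]
        ring
    · rcases Nat.eq_zero_or_pos h with hh0 | hh0
      · subst hh0; simp only [Nat.cast_zero, zero_mul, mul_zero, pow_zero, Nat.add_zero]
        ring
      · have step : (m:ℝ) * x ^ (m-1) * (a h * x ^ h) - x ^ m * ((h:ℝ) * a h * x ^ (h-1))
            = (m:ℝ) * a h * (x^(m-1) * x^h) - (h:ℝ) * a h * (x^m * x^(h-1)) := by ring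
        rw [step, ← pow_add, ← pow_add, show m - 1 + h = m + h - 1 by omega,
          show m + (h - 1) = m + h - 1 by omega]
        ring
  rw [hR]
  -- combine
  have hneg : ∑ j ∈ Ico (m+1) (r+1), ((j:ℝ) - m) * (a j * x ^ (m + j - 1))
      = -∑ j ∈ Ico (m+1) (r+1), ((m:ℝ) - j) * (a j * x ^ (m + j - 1)) := by
    rw [← Finset.sum_neg_distrib]
    exact sum_congr rfl fun j _ => by ring
  have hbot : ∑ j ∈ Ico m (r+1), ((m:ℝ) - j) * (a j * x ^ (m + j - 1))
      = ((m:ℝ) - m) * (a m * x ^ (m + m - 1))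
        + ∑ j ∈ Ico (m+1) (r+1), ((m:ℝ) - j) * (a j * x ^ (m + j - 1)) :=
    Finset.sum_eq_sum_Ico_succ_bot (by omega) _
  have hzero : ((m:ℝ) - m) * (a m * x ^ (m + m - 1)) = 0 := by ring
  rw [hneg, sub_neg_eq_add,
    show (∑ j ∈ Ico (m+1) (r+1), ((m:ℝ) - j) * (a j * x ^ (m + j - 1)))
      = ∑ j ∈ Ico m (r+1), ((m:ℝ) - j) * (a j * x ^ (m + j - 1)) by
        rw [hbot, hzero, zero_add],
    range_eq_Ico m, Finset.sum_Ico_consecutive _ (Nat.zero_le m) (by omega : m ≤ r + 1),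
    ← range_eq_Ico (r+1)]
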